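/- Invertibility for damped elastodynamic networks: let K = L_σ and C = diag(q_damp) + L_μ and consider the frequency-domain operator at frequency ω ≠ 0, restricted to the interior: A = (L_μ)_{II} + diag((q_damp)_I) + (iω)^{-1}(L_σ)_{II} + iω diag((q_mass)_I), where σ, μ are real symmetric positive semidefinite edge weights, q_mass(i) = m(i)I with m(i) > 0, and q_damp(i) = c_V(i)I with c_V(i) > 0 for all interior i. Then A is invertible, so the frequency-domain Dirichlet problem for the elastodynamic network has a unique solution for any boundary displacement. -/

import Mathlib

open Matrix
open scoped ComplexOrder

/-- The `d`-dimensional discrete gradient. -/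
def dgrad {V E : Type*} {d : ℕ} {K : Type*} [Field K] (e1 e2 : E → V)
    (u : V → Fin d → K) : E → Fin d → K :=
  fun e => u (e1 e) - u (e2 e)

/-- The matrix-weighted graph Laplacian `L_σ = ∇ᵀ diag(σ) ∇` applied to `u`. -/
noncomputable def dlap {V E : Type*} [Fintype E] [DecidableEq V] {d : ℕ} {K : Type*}
    [Field K] (e1 e2 : E → V) (σ : E → Matrix (Fin d) (Fin d) K)
    (u : V → Fin d → K) : V → Fin d → K :=
  fun i => ∑ e, ((if e1 e = i then (1 : K) else 0) - (if e2 e = i then 1 else 0)) •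
    (σ e *ᵥ dgrad e1 e2 u e)

/-- Connectivity within a vertex set `S`. -/
def connWithin {V E : Type*} (e1 e2 : E → V) (S : Set V) : Prop :=
  ∀ i ∈ S, ∀ j ∈ S, Relation.ReflTransGen
    (fun a b => a ∈ S ∧ b ∈ S ∧ ∃ e, (e1 e = a ∧ e2 e = b) ∨ (e1 e = b ∧ e2 e = a)) i j

/-- The frequency-domain elastodynamic operator
`A u = (L_μ + diag(c_V) + (iω)⁻¹ L_σ + iω diag(m)) u`. -/
noncomputable def elastOp {V E : Type*} [Fintype E] [DecidableEq V] {d : ℕ}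
    (e1 e2 : E → V) (σ μ : E → Matrix (Fin d) (Fin d) ℝ)
    (m cV : V → ℝ) (ω : ℝ) (u : V → Fin d → ℂ) : V → Fin d → ℂ :=
  fun i => dlap e1 e2 (fun e => (μ e).map (fun a => (a : ℂ))) u i +
    (cV i : ℂ) • u i +
    (Complex.I * ω)⁻¹ • dlap e1 e2 (fun e => (σ e).map (fun a => (a : ℂ))) u i +
    (Complex.I * ω) • ((m i : ℂ) • u i)

-- linearity
lemma dgrad_add {V E : Type*} {d : ℕ} (e1 e2 : E → V) (u v : V → Fin d → ℂ) :
    dgrad e1 e2 (u + v) = dgrad e1 e2 u + dgrad e1 e2 v := by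
  funext e k; simp [dgrad]; ring

lemma dgrad_smul {V E : Type*} {d : ℕ} (e1 e2 : E → V) (c : ℂ) (u : V → Fin d → ℂ) :
    dgrad e1 e2 (c • u) = c • dgrad e1 e2 u := by
  funext e k; simp [dgrad]; ring

lemma dlap_add {V E : Type*} [Fintype E] [DecidableEq V] {d : ℕ}
    (e1 e2 : E → V) (M : E → Matrix (Fin d) (Fin d) ℂ) (u v : V → Fin d → ℂ) :
    dlap e1 e2 M (u + v) = dlap e1 e2 M u + dlap e1 e2 M v := by
  funext i
  simp only [dlap, dgrad_add, Pi.add_apply, Matrix.mulVec_add, smul_add,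
    Finset.sum_add_distrib]

lemma dlap_smul {V E : Type*} [Fintype E] [DecidableEq V] {d : ℕ}
    (e1 e2 : E → V) (M : E → Matrix (Fin d) (Fin d) ℂ) (c : ℂ) (u : V → Fin d → ℂ) :
    dlap e1 e2 M (c • u) = c • dlap e1 e2 M u := by
  funext i
  simp only [dlap, dgrad_smul, Pi.smul_apply, Matrix.mulVec_smul, Finset.smul_sum]
  exact Finset.sum_congr rfl fun e _ => smul_comm _ _ _

lemma elastOp_add {V E : Type*} [Fintype E] [DecidableEq V] {d : ℕ}
    (e1 e2 : E → V) (σ μ : E → Matrix (Fin d) (Fin d) ℝ)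
    (m cV : V → ℝ) (ω : ℝ) (u v : V → Fin d → ℂ) :
    elastOp e1 e2 σ μ m cV ω (u + v)
      = fun i => elastOp e1 e2 σ μ m cV ω u i + elastOp e1 e2 σ μ m cV ω v i := by
  funext i
  simp only [elastOp, dlap_add, Pi.add_apply, smul_add]
  ring

lemma elastOp_smul {V E : Type*} [Fintype E] [DecidableEq V] {d : ℕ}
    (e1 e2 : E → V) (σ μ : E → Matrix (Fin d) (Fin d) ℝ)
    (m cV : V → ℝ) (ω : ℝ) (c : ℂ) (u : V → Fin d → ℂ) :
    elastOp e1 e2 σ μ m cV ω (c • u)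
      = fun i => c • elastOp e1 e2 σ μ m cV ω u i := by
  funext i
  simp only [elastOp, dlap_smul, Pi.smul_apply, smul_smul, smul_add]
  ring_nf

lemma posSemidef_map_ofReal {d : ℕ} {M : Matrix (Fin d) (Fin d) ℝ} (hM : M.PosSemidef) :
    (M.map (fun a => (a : ℂ))).PosSemidef := by
  obtain ⟨B, rfl⟩ : ∃ B : Matrix (Fin d) (Fin d) ℝ, M = Bᴴ * B := by
    open MatrixOrder in
    obtain ⟨X, hX, -, hXM⟩ := sub_zero M ▸ CFC.exists_sqrt_of_isSelfAdjoint_of_quasispectrumRestricts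
      hM.isHermitian (QuasispectrumRestricts.nnreal_of_nonneg hM.nonneg)
    exact ⟨X, by rw [← sub_zero M, ← hXM, ← star_eq_conjTranspose, hX.star_eq]⟩
  have he : (fun a : ℝ => (a : ℂ)) = ⇑Complex.ofRealHom := rfl
  rw [he, Matrix.map_mul, Matrix.conjTranspose_map Complex.ofRealHom (by intro a; simp)]
  exact Matrix.posSemidef_conjTranspose_mul_self _

lemma dotProduct_sum' {E : Type*} [Fintype E] {d : ℕ} (x : Fin d → ℂ) (f : E → Fin d → ℂ) :
    x ⬝ᵥ (∑ e, f e) = ∑ e, x ⬝ᵥ f e := by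
  simp only [dotProduct, Finset.sum_apply, Finset.mul_sum]
  exact Finset.sum_comm

lemma sum_star_dotProduct_dlap {V E : Type*} [Fintype V] [Fintype E] [DecidableEq V] {d : ℕ}
    (e1 e2 : E → V) (M : E → Matrix (Fin d) (Fin d) ℂ) (z : V → Fin d → ℂ) :
    ∑ i, star (z i) ⬝ᵥ dlap e1 e2 M z i
      = ∑ e, star (dgrad e1 e2 z e) ⬝ᵥ (M e *ᵥ dgrad e1 e2 z e) := by
  unfold dlap
  simp only [dotProduct_sum']
  rw [Finset.sum_comm]
  refine Finset.sum_congr rfl fun e _ => ?_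
  simp only [dotProduct_smul, smul_eq_mul, sub_mul, one_mul, zero_mul, ite_mul,
    Finset.sum_sub_distrib, Finset.sum_ite_eq, Finset.mem_univ, if_true]
  rw [← sub_dotProduct]
  congr 1
  show star (z (e1 e)) - star (z (e2 e)) = _
  unfold dgrad
  ext k
  simp

lemma energy_zero {V E : Type*} [Fintype V] [Fintype E] [DecidableEq V] {d : ℕ}
    (e1 e2 : E → V) (Bd : V → Prop) [DecidablePred Bd]
    (σ μ : E → Matrix (Fin d) (Fin d) ℝ)
    (hσ : ∀ e, (σ e).PosSemidef) (hμ : ∀ e, (μ e).PosSemidef)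
    (m cV : V → ℝ) (hcV : ∀ i, ¬ Bd i → 0 < cV i)
    (ω : ℝ) (hω : ω ≠ 0) (z : V → Fin d → ℂ)
    (hb : ∀ i, Bd i → z i = 0)
    (hi : ∀ i, ¬ Bd i → elastOp e1 e2 σ μ m cV ω z i = 0) : z = 0 := by
  set μc := fun e => (μ e).map (fun a : ℝ => (a : ℂ)) with hμc
  set σc := fun e => (σ e).map (fun a : ℝ => (a : ℂ)) with hσc
  set g := dgrad e1 e2 z with hg
  set n : V → ℝ := fun i => ∑ k, Complex.normSq (z i k) with hn
  have hn_nonneg : ∀ i, 0 ≤ n i := fun i => Finset.sum_nonneg fun k _ => Complex.normSq_nonneg _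
  have hzdot : ∀ i, star (z i) ⬝ᵥ z i = (n i : ℂ) := by
    intro i
    simp only [dotProduct, hn, Pi.star_apply, Complex.ofReal_sum]
    exact Finset.sum_congr rfl fun k _ => (Complex.normSq_eq_conj_mul_self).symm
  have hQμ : 0 ≤ ∑ e, star (g e) ⬝ᵥ (μc e *ᵥ g e) :=
    Finset.sum_nonneg fun e _ => (posSemidef_map_ofReal (hμ e)).dotProduct_mulVec_nonneg (g e)
  have hQσ : 0 ≤ ∑ e, star (g e) ⬝ᵥ (σc e *ᵥ g e) :=
    Finset.sum_nonneg fun e _ => (posSemidef_map_ofReal (hσ e)).dotProduct_mulVec_nonneg (g e)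
  obtain ⟨haRe, haIm⟩ := Complex.nonneg_iff.mp hQμ
  obtain ⟨hbRe, hbIm⟩ := Complex.nonneg_iff.mp hQσ
  set a : ℝ := (∑ e, star (g e) ⬝ᵥ (μc e *ᵥ g e)).re with ha
  set b : ℝ := (∑ e, star (g e) ⬝ᵥ (σc e *ᵥ g e)).re with hbdef
  have hQμ_eq : ∑ e, star (g e) ⬝ᵥ (μc e *ᵥ g e) = (a : ℂ) := by
    apply Complex.ext <;> simp [ha, ← haIm]
  have hQσ_eq : ∑ e, star (g e) ⬝ᵥ (σc e *ᵥ g e) = (b : ℂ) := by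
    apply Complex.ext <;> simp [hbdef, ← hbIm]
  -- main identity
  have h0 : ∑ i, star (z i) ⬝ᵥ elastOp e1 e2 σ μ m cV ω z i = 0 := by
    apply Finset.sum_eq_zero; intro i _
    by_cases h : Bd i
    · rw [hb i h]; simp
    · rw [hi i h]; simp
  have expand : ∀ i, star (z i) ⬝ᵥ elastOp e1 e2 σ μ m cV ω z i
      = star (z i) ⬝ᵥ dlap e1 e2 μc z i + ((cV i * n i : ℝ) : ℂ)
        + (Complex.I * ω)⁻¹ * (star (z i) ⬝ᵥ dlap e1 e2 σc z i)
        + (Complex.I * ω) * ((m i * n i : ℝ) : ℂ) := by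
    intro i
    show star (z i) ⬝ᵥ (dlap e1 e2 μc z i + (cV i : ℂ) • z i
        + (Complex.I * ω)⁻¹ • dlap e1 e2 σc z i
        + (Complex.I * ω) • ((m i : ℂ) • z i)) = _
    simp only [dotProduct_add, dotProduct_smul, smul_eq_mul, hzdot]
    push_cast
    ring
  rw [Finset.sum_congr rfl (fun i _ => expand i)] at h0
  simp only [Finset.sum_add_distrib, ← Finset.mul_sum, sum_star_dotProduct_dlap, ← hg,
    hQμ_eq, hQσ_eq] at h0
  -- take real part after clearing the inverse
  have hIω : (Complex.I * (ω : ℂ)) ≠ 0 := by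
    simp [Complex.I_ne_zero, Complex.ofReal_ne_zero, hω]
  set c : ℝ := ∑ i, cV i * n i with hc
  set d' : ℝ := ∑ i, m i * n i with hd'
  have hc_eq : ∑ i, ((cV i * n i : ℝ) : ℂ) = (c : ℂ) := by push_cast [hc]; rfl
  have hd_eq : ∑ i, ((m i * n i : ℝ) : ℂ) = (d' : ℂ) := by push_cast [hd']; rfl
  rw [hc_eq, hd_eq] at h0
  have h2 : Complex.I * (ω : ℂ) * ((a : ℂ) + (c : ℂ)) + (b : ℂ)
      + (Complex.I * (ω : ℂ))^2 * (d' : ℂ) = 0 := by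
    have h3 := congrArg (fun w => Complex.I * (ω : ℂ) * w) h0
    simp only [mul_zero] at h3
    field_simp at h3 ⊢
    linear_combination h3
  have him := congrArg Complex.im h2
  simp [Complex.add_im, Complex.mul_im, Complex.mul_re, pow_two] at him
  have hac : a + c = 0 := him.resolve_left hω
  have hcnn : 0 ≤ c := by
    rw [hc]
    apply Finset.sum_nonneg
    intro i _
    by_cases h : Bd i
    · have : n i = 0 := by simp [hn, hb i h]
      simp [this]
    · exact mul_nonneg (hcV i h).le (hn_nonneg i)
  have hc0 : c = 0 := le_antisymm (by linarith) hcnn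
  have hterm : ∀ i ∈ Finset.univ, cV i * n i = 0 := by
    rw [hc] at hc0
    refine (Finset.sum_eq_zero_iff_of_nonneg ?_).mp hc0
    intro i _
    by_cases h : Bd i
    · have : n i = 0 := by simp [hn, hb i h]
      simp [this]
    · exact mul_nonneg (hcV i h).le (hn_nonneg i)
  funext i
  by_cases h : Bd i
  · exact hb i h
  · have hni : n i = 0 := by
      have := hterm i (Finset.mem_univ i)
      exact (mul_eq_zero.mp this).resolve_left (hcV i h).ne'
    have hk : ∀ k ∈ Finset.univ, Complex.normSq (z i k) = 0 :=
      (Finset.sum_eq_zero_iff_of_nonneg (fun k _ => Complex.normSq_nonneg _)).mp hni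
    funext k
    exact Complex.normSq_eq_zero.mp (hk k (Finset.mem_univ k))

/-- **invertibility for damped elastodynamic networks.** For real
symmetric positive semidefinite edge weights `σ`, `μ` (stiffness and spring damping),
positive masses `m`, positive nodal damping `c_V` on the interior, and `ω ≠ 0`, the
interior frequency-domain operator
`A = (L_μ)_{II} + diag((c_V)_I) + (iω)⁻¹(L_σ)_{II} + iω diag(m_I)` is invertible
(stated as: only the zero interior-supported field is annihilated), so the
frequency-domain Dirichlet problem has a unique solution for any boundary
displacement. -/
theorem elastodynamic_invertibility {V E : Type*} [Fintype V] [Fintype E]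
    [DecidableEq V] {d : ℕ} (e1 e2 : E → V)
    (Bd : V → Prop) [DecidablePred Bd] (hBne : ∃ i, Bd i)
    (hconn : connWithin e1 e2 Set.univ)
    (hconnI : connWithin e1 e2 {v | ¬ Bd v})
    (σ μ : E → Matrix (Fin d) (Fin d) ℝ)
    (hσ : ∀ e, (σ e).PosSemidef) (hμ : ∀ e, (μ e).PosSemidef)
    (m cV : V → ℝ) (hm : ∀ i, 0 < m i) (hcV : ∀ i, ¬ Bd i → 0 < cV i)
    (ω : ℝ) (hω : ω ≠ 0) :
    (∀ z : V → Fin d → ℂ, (∀ i, Bd i → z i = 0) →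
      (∀ i, ¬ Bd i → elastOp e1 e2 σ μ m cV ω z i = 0) → z = 0) ∧
    (∀ g : V → Fin d → ℂ, ∃! u : V → Fin d → ℂ,
      (∀ i, Bd i → u i = g i) ∧
      ∀ i, ¬ Bd i → elastOp e1 e2 σ μ m cV ω u i = 0) := by
  classical
  have part1 : ∀ z : V → Fin d → ℂ, (∀ i, Bd i → z i = 0) →
      (∀ i, ¬ Bd i → elastOp e1 e2 σ μ m cV ω z i = 0) → z = 0 :=
    fun z hzb hzi => energy_zero e1 e2 Bd σ μ hσ hμ m cV hcV ω hω z hzb hzi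
  refine ⟨part1, ?_⟩
  let T : (V → Fin d → ℂ) →ₗ[ℂ] (V → Fin d → ℂ) :=
    { toFun := fun u i => if Bd i then u i else elastOp e1 e2 σ μ m cV ω u i
      map_add' := by
        intro u v; funext i
        by_cases h : Bd i <;>
          simp [h, elastOp_add e1 e2 σ μ m cV ω u v]
      map_smul' := by
        intro c u; funext i
        by_cases h : Bd i <;>
          simp [h, elastOp_smul e1 e2 σ μ m cV ω c u] }
  have hinj : Function.Injective T := by
    intro u v huv
    have h0 : u - v = 0 := by
      apply part1
      · intro i h
        have := congrFun (show T (u - v) = 0 by rw [map_sub, huv, sub_self]) i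
        simpa [T, h] using this
      · intro i h
        have := congrFun (show T (u - v) = 0 by rw [map_sub, huv, sub_self]) i
        simpa [T, h] using this
    exact sub_eq_zero.mp h0
  have hsurj : Function.Surjective T := (LinearMap.injective_iff_surjective).mp hinj
  intro gbd
  obtain ⟨u, hu⟩ := hsurj (fun i => if Bd i then gbd i else 0)
  refine ⟨u, ⟨?_, ?_⟩, ?_⟩
  · intro i h
    have := congrFun hu i
    simpa [T, h] using this
  · intro i h
    have := congrFun hu i
    simpa [T, h] using this
  · intro u' ⟨hu'b, hu'i⟩
    apply hinj
    rw [hu]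
    funext i
    by_cases h : Bd i <;> simp [T, h, hu'b i, hu'i i, hu'b, hu'i]
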